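/- arXiv:1001.5296 — 4 statements merged into one kernel-verified Lean document; each statement's English description precedes it below -/
import Mathlib

section
/- Let K be a field equipped with a nonarchimedean multiplicative norm ‖·‖ with ‖2‖ ≤ 1, and equip Mₙ(K) with the entrywise sup norm. Let X ∈ Mₙ(K) with ‖X‖ < 1 and with 1 − X invertible. Then ‖(1+X)·(1−X)⁻¹ − (1 + 2X)‖ ≤ ‖X‖². -/
open Matrix

attribute [local instance] Matrix.seminormedAddCommGroup

section aux

variable {K : Type*} [NormedField K] {n : ℕ}

lemma matrix_norm_mul_le_na (hna : IsNonarchimedean fun x : K => ‖x‖)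
    (A B : Matrix (Fin n) (Fin n) K) : ‖A * B‖ ≤ ‖A‖ * ‖B‖ := by
  have : IsUltrametricDist K :=
    IsUltrametricDist.isUltrametricDist_of_isNonarchimedean_norm hna
  rw [Matrix.norm_le_iff (by positivity)]
  intro i j
  rw [Matrix.mul_apply]
  refine IsUltrametricDist.norm_sum_le_of_forall_le_of_nonneg (by positivity) fun k _ => ?_
  calc ‖A i k * B k j‖ ≤ ‖A i k‖ * ‖B k j‖ := norm_mul_le _ _
    _ ≤ ‖A‖ * ‖B‖ := mul_le_mul (Matrix.norm_entry_le_entrywise_sup_norm A)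
        (Matrix.norm_entry_le_entrywise_sup_norm B) (norm_nonneg _) (norm_nonneg _)

lemma matrix_norm_add_le_max (hna : IsNonarchimedean fun x : K => ‖x‖)
    (A B : Matrix (Fin n) (Fin n) K) : ‖A + B‖ ≤ max ‖A‖ ‖B‖ := by
  rw [Matrix.norm_le_iff (le_max_of_le_left (norm_nonneg _))]
  intro i j
  exact (hna _ _).trans (max_le_max (Matrix.norm_entry_le_entrywise_sup_norm A)
    (Matrix.norm_entry_le_entrywise_sup_norm B))

lemma matrix_norm_one_le : ‖(1 : Matrix (Fin n) (Fin n) K)‖ ≤ 1 := by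
  rw [Matrix.norm_le_iff zero_le_one]
  intro i j
  rw [Matrix.one_apply]
  split <;> simp

end aux

/-- Over a nonarchimedean normed field with `‖2‖ ≤ 1`, if `‖X‖ < 1` (entrywise sup norm)
and `1 - X` is invertible, then the Cayley transform satisfies
`‖(1+X)(1-X)⁻¹ - (1 + 2X)‖ ≤ ‖X‖²`. -/
theorem cayley_approx {K : Type*} [NormedField K]
    (hna : IsNonarchimedean fun x : K => ‖x‖) (h2 : ‖(2 : K)‖ ≤ 1)
    {n : ℕ} (X : Matrix (Fin n) (Fin n) K)
    (hX : ‖X‖ < 1) (h1X : IsUnit (1 - X)) :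
    ‖(1 + X) * (1 - X)⁻¹ - (1 + 2 • X)‖ ≤ ‖X‖ ^ 2 := by
  set A := (1 - X)⁻¹ with hA
  have hdet : IsUnit (1 - X).det := (Matrix.isUnit_iff_isUnit_det _).mp h1X
  have hBA : (1 - X) * A = 1 := Matrix.mul_nonsing_inv _ hdet
  -- A = 1 + X * A
  have hAid : A = 1 + X * A := by
    have := hBA
    rw [sub_mul, one_mul] at this
    exact (sub_eq_iff_eq_add.mp this)
  -- ‖A‖ ≤ 1
  have hAle : ‖A‖ ≤ 1 := by
    by_contra h
    push_neg at h
    have h1 : ‖A‖ ≤ max ‖(1 : Matrix (Fin n) (Fin n) K)‖ ‖X * A‖ := by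
      nth_rewrite 1 [hAid]; exact matrix_norm_add_le_max hna _ _
    have h2' : ‖X * A‖ ≤ ‖X‖ * ‖A‖ := matrix_norm_mul_le_na hna _ _
    have : ‖A‖ ≤ max 1 (‖X‖ * ‖A‖) :=
      h1.trans (max_le_max matrix_norm_one_le h2')
    rcases max_cases 1 (‖X‖ * ‖A‖) with ⟨he, _⟩ | ⟨he, _⟩
    · rw [he] at this; linarith
    · rw [he] at this
      nlinarith [norm_nonneg A]
  -- key identity
  have hid : (1 + X) * A - (1 + 2 • X) = (X * X + X * X) * A := by
    have : (1 + X) - (1 + 2 • X) * (1 - X) = X * X + X * X := by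
      rw [two_smul]; noncomm_ring
    calc (1 + X) * A - (1 + 2 • X) = (1 + X) * A - (1 + 2 • X) * ((1 - X) * A) := by
          rw [hBA, mul_one]
      _ = ((1 + X) - (1 + 2 • X) * (1 - X)) * A := by noncomm_ring
      _ = (X * X + X * X) * A := by rw [this]
  rw [hid]
  calc ‖(X * X + X * X) * A‖ ≤ ‖X * X + X * X‖ * ‖A‖ := matrix_norm_mul_le_na hna _ _
    _ ≤ ‖X * X‖ * 1 := mul_le_mul ((matrix_norm_add_le_max hna _ _).trans (by simp))
        hAle (norm_nonneg _) (norm_nonneg _)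
    _ ≤ ‖X‖ * ‖X‖ := by rw [mul_one]; exact matrix_norm_mul_le_na hna _ _
    _ = ‖X‖ ^ 2 := (sq ‖X‖).symm
end

section
/- Let K be a field and let J ∈ Mₙ(K) satisfy Jᵀ = −J. Suppose X ∈ Mₙ(K) is J-skew-adjoint, i.e. Xᵀ·J + J·X = 0, and v, w ∈ Kⁿ satisfy X·v = λ·v and X·w = μ·w. Then Y := v·wᵀ·J + w·vᵀ·J is J-skew-adjoint and satisfies X·Y − Y·X = (λ+μ)·Y. -/
open Matrix

private lemma mul_vmv {K : Type*} [Field K] {n : ℕ} (X : Matrix (Fin n) (Fin n) K)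
    (v w : Fin n → K) : X * vecMulVec v w = vecMulVec (X *ᵥ v) w := by
  ext i j
  simp [Matrix.mul_apply, vecMulVec_apply, mulVec, dotProduct, Finset.sum_mul, mul_assoc]

private lemma vmv_mul {K : Type*} [Field K] {n : ℕ} (X : Matrix (Fin n) (Fin n) K)
    (v w : Fin n → K) : vecMulVec v w * X = vecMulVec v (Xᵀ *ᵥ w) := by
  ext i j
  simp only [Matrix.mul_apply, vecMulVec_apply, mulVec, dotProduct, Finset.mul_sum,
    transpose_apply]
  exact Finset.sum_congr rfl fun k _ => by ring

private lemma vmv_smul {K : Type*} [Field K] {n : ℕ} (c : K)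
    (v w : Fin n → K) : vecMulVec (c • v) w = c • vecMulVec v w := by
  ext i j
  simp [vecMulVec_apply, mul_assoc]

private lemma vmv_transpose {K : Type*} [Field K] {n : ℕ}
    (v w : Fin n → K) : (vecMulVec v w)ᵀ = vecMulVec w v := by
  ext i j
  simp [vecMulVec_apply, mul_comm]

/-- Symplectic case: if `Jᵀ = -J`, `X` is `J`-skew-adjoint, and `v, w` are eigenvectors
of `X` with eigenvalues `λ, μ`, then `Y = v wᵀ J + w vᵀ J` is `J`-skew-adjoint and
`[X, Y] = (λ + μ) Y`. -/
theorem ad_eigen_symplectic {K : Type*} [Field K] {n : ℕ}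
    (J X : Matrix (Fin n) (Fin n) K) (hJ : Jᵀ = -J)
    (hX : Xᵀ * J + J * X = 0)
    (v w : Fin n → K) (lam mu : K)
    (hv : X *ᵥ v = lam • v) (hw : X *ᵥ w = mu • w) :
    (vecMulVec v w * J + vecMulVec w v * J)ᵀ * J
        + J * (vecMulVec v w * J + vecMulVec w v * J) = 0 ∧
    X * (vecMulVec v w * J + vecMulVec w v * J)
        - (vecMulVec v w * J + vecMulVec w v * J) * X
      = (lam + mu) • (vecMulVec v w * J + vecMulVec w v * J) := by
  have hJX : J * X = -(Xᵀ * J) := by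
    have := hX
    linear_combination (norm := noncomm_ring) hX
  constructor
  · simp only [transpose_add, transpose_mul, hJ, vmv_transpose]
    noncomm_ring
  · have h1 : X * (vecMulVec v w * J) = lam • (vecMulVec v w * J) := by
      rw [← mul_assoc, mul_vmv, hv, vmv_smul, smul_mul_assoc]
    have h2 : X * (vecMulVec w v * J) = mu • (vecMulVec w v * J) := by
      rw [← mul_assoc, mul_vmv, hw, vmv_smul, smul_mul_assoc]
    have h3 : vecMulVec v w * J * X = -(mu • (vecMulVec v w * J)) := by
      rw [mul_assoc, hJX, mul_neg, ← mul_assoc, vmv_mul, transpose_transpose, hw]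
      ext i j
      simp [vecMulVec_apply, Matrix.mul_apply, Finset.mul_sum, Finset.sum_mul, mul_assoc,
        mul_comm, mul_left_comm]
    have h4 : vecMulVec w v * J * X = -(lam • (vecMulVec w v * J)) := by
      rw [mul_assoc, hJX, mul_neg, ← mul_assoc, vmv_mul, transpose_transpose, hv]
      ext i j
      simp [vecMulVec_apply, Matrix.mul_apply, Finset.mul_sum, Finset.sum_mul, mul_assoc,
        mul_comm, mul_left_comm]
    rw [mul_add, add_mul, h1, h2, h3, h4]
    module
end

section
/- Let K be a field and let J be an invertible n×n matrix over K with Jᵀ = −J. Suppose X ∈ Mₙ(K) is J-skew-adjoint, i.e. Xᵀ·J + J·X = 0, and v ∈ Kⁿ is a nonzero vector with X·v = λ·v. Then Y := v·vᵀ·J is a nonzero J-skew-adjoint matrix satisfying X·Y − Y·X = (2λ)·Y. In particular, 2λ is an eigenvalue of the adjoint operator ad(X) : Y ↦ XY − YX acting on the space of J-skew-adjoint matrices. -/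
open Matrix

lemma mul_vecMulVec' {K : Type*} [CommRing K] {n : ℕ} (X : Matrix (Fin n) (Fin n) K)
    (v w : Fin n → K) : X * vecMulVec v w = vecMulVec (X *ᵥ v) w := by
  ext i j
  simp [mul_apply, vecMulVec_apply, mulVec, dotProduct, Finset.sum_mul, mul_assoc]

lemma vecMulVec_mul_transpose' {K : Type*} [CommRing K] {n : ℕ} (X : Matrix (Fin n) (Fin n) K)
    (v w : Fin n → K) : vecMulVec v w * Xᵀ = vecMulVec v (X *ᵥ w) := by
  ext i j
  simp [mul_apply, vecMulVec_apply, mulVec, dotProduct, Finset.mul_sum, mul_assoc,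
    mul_comm, mul_left_comm]

lemma vecMulVec_smul_left' {K : Type*} [CommRing K] {n : ℕ} (c : K) (v w : Fin n → K) :
    vecMulVec (c • v) w = c • vecMulVec v w := by
  ext i j; simp [vecMulVec_apply, mul_assoc]

lemma vecMulVec_smul_right' {K : Type*} [CommRing K] {n : ℕ} (c : K) (v w : Fin n → K) :
    vecMulVec v (c • w) = c • vecMulVec v w := by
  ext i j; simp [vecMulVec_apply, mul_left_comm]

lemma vecMulVec_transpose' {K : Type*} [CommRing K] {n : ℕ} (v w : Fin n → K) :
    (vecMulVec v w)ᵀ = vecMulVec w v := by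
  ext i j; simp [vecMulVec_apply, mul_comm]

/-- Symplectic case: if `J` is invertible with `Jᵀ = -J`, `X` is `J`-skew-adjoint and
`v ≠ 0` satisfies `X v = λ v`, then `Y = v vᵀ J` is a nonzero `J`-skew-adjoint matrix
with `[X, Y] = 2λ Y`; in particular `2λ` is a root value of `X`. -/
theorem two_lam_root_value_symplectic {K : Type*} [Field K] {n : ℕ}
    (J X : Matrix (Fin n) (Fin n) K) (hJ : IsUnit J) (hJt : Jᵀ = -J)
    (hX : Xᵀ * J + J * X = 0)
    (v : Fin n → K) (hv : v ≠ 0) (lam : K) (hev : X *ᵥ v = lam • v) :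
    vecMulVec v v * J ≠ 0 ∧
    (vecMulVec v v * J)ᵀ * J + J * (vecMulVec v v * J) = 0 ∧
    X * (vecMulVec v v * J) - (vecMulVec v v * J) * X
      = (2 * lam) • (vecMulVec v v * J) := by
  have hdet : IsUnit J.det := (Matrix.isUnit_iff_isUnit_det J).mp hJ
  have hJX : J * X = -(Xᵀ * J) := by
    rw [eq_neg_iff_add_eq_zero, add_comm]; exact hX
  refine ⟨?_, ?_, ?_⟩
  · intro h
    have h2 : vecMulVec v v = 0 := by
      have := congrArg (fun M => M * J⁻¹) h
      simpa [Matrix.mul_assoc, Matrix.mul_nonsing_inv _ hdet] using this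
    obtain ⟨i, hi⟩ := Function.ne_iff.mp hv
    have h3 : v i * v i = 0 := congrFun (congrFun h2 i) i
    exact hi (by simpa using mul_self_eq_zero.mp h3)
  · rw [Matrix.transpose_mul, hJt, vecMulVec_transpose']
    simp [Matrix.mul_assoc, Matrix.neg_mul]
  · calc X * (vecMulVec v v * J) - vecMulVec v v * J * X
        = (X * vecMulVec v v) * J - (vecMulVec v v * (J * X)) := by
          rw [Matrix.mul_assoc, Matrix.mul_assoc]
      _ = (2 * lam) • (vecMulVec v v * J) := by
          rw [hJX, mul_vecMulVec', hev, vecMulVec_smul_left']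
          have : vecMulVec v v * -(Xᵀ * J) = -((vecMulVec v v * Xᵀ) * J) := by
            rw [Matrix.mul_neg, Matrix.mul_assoc]
          rw [this, vecMulVec_mul_transpose', hev, vecMulVec_smul_right']
          rw [sub_neg_eq_add, two_mul, add_smul, Matrix.smul_mul]
end

section
/- Let K be a field equipped with a nonarchimedean multiplicative norm ‖·‖ with ‖2‖ = 1, and equip Mₙ(K) with the entrywise sup norm. Let X ∈ Mₙ(K) with 0 < ‖X‖ < 1 and with 1 − X invertible. Then ‖(1+X)·(1−X)⁻¹ − 1‖ = ‖X‖. -/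
open Matrix

attribute [local instance] Matrix.seminormedAddCommGroup

private lemma sum_norm_le {K : Type*} [NormedField K]
    (hna : IsNonarchimedean fun x : K => ‖x‖) {ι : Type*} (s : Finset ι)
    (f : ι → K) {C : ℝ} (hC : 0 ≤ C) (h : ∀ k ∈ s, ‖f k‖ ≤ C) :
    ‖∑ k ∈ s, f k‖ ≤ C := by
  induction s using Finset.cons_induction with
  | empty => simpa using hC
  | cons a s ha ih =>
      rw [Finset.sum_cons]
      refine le_trans (hna _ _) (max_le (h a (Finset.mem_cons_self a s)) ?_)
      exact ih fun k hk => h k (Finset.mem_cons_of_mem hk)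

private lemma mat_na {K : Type*} [NormedField K]
    (hna : IsNonarchimedean fun x : K => ‖x‖) {n : ℕ}
    (A B : Matrix (Fin n) (Fin n) K) : ‖A + B‖ ≤ max ‖A‖ ‖B‖ := by
  rw [Matrix.norm_le_iff (le_max_of_le_left (norm_nonneg A))]
  intro i j
  refine le_trans (hna _ _) (max_le_max ?_ ?_) <;>
    exact Matrix.norm_entry_le_entrywise_sup_norm _

private lemma mat_mul_le {K : Type*} [NormedField K]
    (hna : IsNonarchimedean fun x : K => ‖x‖) {n : ℕ}
    (A B : Matrix (Fin n) (Fin n) K) : ‖A * B‖ ≤ ‖A‖ * ‖B‖ := by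
  rw [Matrix.norm_le_iff (mul_nonneg (norm_nonneg A) (norm_nonneg B))]
  intro i j
  rw [Matrix.mul_apply]
  refine sum_norm_le hna _ _ (mul_nonneg (norm_nonneg A) (norm_nonneg B)) ?_
  intro k _
  rw [norm_mul]
  exact mul_le_mul (Matrix.norm_entry_le_entrywise_sup_norm _)
    (Matrix.norm_entry_le_entrywise_sup_norm _) (norm_nonneg _) (norm_nonneg A)

/-- Over a nonarchimedean normed field with `‖2‖ = 1`, the Cayley transform preserves
depth: if `0 < ‖X‖ < 1` (entrywise sup norm) and `1 - X` is invertible, then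
`‖(1+X)(1-X)⁻¹ - 1‖ = ‖X‖`. -/
theorem cayley_preserves_depth {K : Type*} [NormedField K]
    (hna : IsNonarchimedean fun x : K => ‖x‖) (h2 : ‖(2 : K)‖ = 1)
    {n : ℕ} (X : Matrix (Fin n) (Fin n) K)
    (hX0 : 0 < ‖X‖) (hX : ‖X‖ < 1) (h1X : IsUnit (1 - X)) :
    ‖(1 + X) * (1 - X)⁻¹ - 1‖ = ‖X‖ := by
  set Y : Matrix (Fin n) (Fin n) K := (1 + X) * (1 - X)⁻¹ - 1 with hY
  have hdet : IsUnit (1 - X).det := (Matrix.isUnit_iff_isUnit_det _).mp h1X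
  have hinv : (1 - X)⁻¹ * (1 - X) = 1 := Matrix.nonsing_inv_mul _ hdet
  have hkey : Y * (1 - X) = X + X := by
    rw [hY, sub_mul, mul_assoc, hinv, mul_one, one_mul]
    abel
  -- norm of X + X equals norm of X
  have hXX : ‖X + X‖ = ‖X‖ := by
    have hentry : ∀ i j, ‖(X + X) i j‖ = ‖X i j‖ := by
      intro i j
      have : (X + X) i j = (2 : K) * X i j := by
        simp [two_mul]
      rw [this, norm_mul, h2, one_mul]
    apply le_antisymm
    · rw [Matrix.norm_le_iff (norm_nonneg X)]
      intro i j
      rw [hentry]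
      exact Matrix.norm_entry_le_entrywise_sup_norm _
    · rw [Matrix.norm_le_iff (norm_nonneg _)]
      intro i j
      rw [← hentry]
      exact Matrix.norm_entry_le_entrywise_sup_norm _
  have hYX : ‖Y * X‖ ≤ ‖Y‖ * ‖X‖ := mat_mul_le hna Y X
  -- X + X = Y - Y * X
  have hsub : X + X = Y + -(Y * X) := by
    rw [← hkey, mul_sub, mul_one, sub_eq_add_neg]
  have hXleY : ‖X‖ ≤ ‖Y‖ := by
    calc ‖X‖ = ‖X + X‖ := hXX.symm
    _ = ‖Y + -(Y * X)‖ := by rw [hsub]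
    _ ≤ max ‖Y‖ ‖-(Y * X)‖ := mat_na hna _ _
    _ ≤ ‖Y‖ := by
        rw [norm_neg]
        refine max_le le_rfl (le_trans hYX ?_)
        calc ‖Y‖ * ‖X‖ ≤ ‖Y‖ * 1 := by
              exact mul_le_mul_of_nonneg_left hX.le (norm_nonneg Y)
        _ = ‖Y‖ := mul_one _
  have hYle : ‖Y‖ ≤ ‖X‖ := by
    by_contra hcon
    push_neg at hcon
    have hYpos : 0 < ‖Y‖ := lt_trans hX0 hcon
    have hYeq : Y = (X + X) + Y * X := by
      rw [← hkey, mul_sub, mul_one, sub_add_cancel]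
    have hle : ‖Y‖ ≤ max ‖X + X‖ ‖Y * X‖ := by
      calc ‖Y‖ = ‖(X + X) + Y * X‖ := by rw [← hYeq]
      _ ≤ max ‖X + X‖ ‖Y * X‖ := mat_na hna _ _
    have hlt : max ‖X + X‖ ‖Y * X‖ < ‖Y‖ := by
      apply max_lt
      · rw [hXX]; exact hcon
      · refine lt_of_le_of_lt hYX ?_
        calc ‖Y‖ * ‖X‖ < ‖Y‖ * 1 := by
              exact mul_lt_mul_of_pos_left hX hYpos
        _ = ‖Y‖ := mul_one _
    exact absurd hle (not_le.mpr hlt)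
  exact le_antisymm hYle hXleY
end
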